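/- For every s ∈ (0,1) and every γ > 0, the smoothed von Mises resolvent R_s is monotone, i.e. (R_s(τ) − R_s(σ)):(τ − σ) ≥ 0 for all σ, τ ∈ ℝ^{d×d}_s. -/

import Mathlib

open scoped Classical

/-- The Frobenius inner product `σ : τ = trace (σ τ)` on (symmetric) matrices. -/
noncomputable def frob {d : ℕ} (A B : Matrix (Fin d) (Fin d) ℝ) : ℝ :=
  Matrix.trace (A * B)

/-- The norm induced by the Frobenius inner product (on symmetric matrices). -/
noncomputable def fnorm {d : ℕ} (A : Matrix (Fin d) (Fin d) ℝ) : ℝ :=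
  Real.sqrt (frob A A)

/-- The deviator `τ^D = τ - (trace τ / d) • I`. -/
noncomputable def dev {d : ℕ} (A : Matrix (Fin d) (Fin d) ℝ) : Matrix (Fin d) (Fin d) ℝ :=
  A - (Matrix.trace A / (d : ℝ)) • (1 : Matrix (Fin d) (Fin d) ℝ)

/-- The smoothed max function `max_s`. -/
noncomputable def maxs (s r : ℝ) : ℝ :=
  if s ≤ |r| then max 0 r else (r + s) ^ 2 / (4 * s)

/-- The smoothed von Mises resolvent `R_s`. -/
noncomputable def Rs {d : ℕ} (s γ : ℝ) (τ : Matrix (Fin d) (Fin d) ℝ) :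
    Matrix (Fin d) (Fin d) ℝ :=
  if dev τ = 0 then τ else τ - maxs s (1 - γ / fnorm (dev τ)) • dev τ

/-! ### Scalar lemmas about `maxs` -/

lemma maxs_nonneg {s r : ℝ} (hs : 0 < s) : 0 ≤ maxs s r := by
  unfold maxs; split_ifs
  · exact le_max_left _ _
  · positivity

lemma maxs_le_one {s r : ℝ} (hs : 0 < s) (hs1 : s < 1) (hr : r ≤ 1) : maxs s r ≤ 1 := by
  unfold maxs; split_ifs with h
  · exact max_le (by norm_num) hr
  · rw [not_le, abs_lt] at h
    rw [div_le_one (by linarith)]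
    nlinarith [h.1, h.2]

lemma maxs_eq_zero {s r : ℝ} (hs : 0 < s) (h : r ≤ -s) : maxs s r = 0 := by
  unfold maxs
  rw [if_pos (by rw [abs_of_nonpos (by linarith)]; linarith)]
  exact max_eq_left (by linarith)

lemma maxs_eq_id {s r : ℝ} (hs : 0 < s) (h : s ≤ r) : maxs s r = r := by
  unfold maxs
  rw [if_pos (by rw [abs_of_nonneg (by linarith)]; exact h)]
  exact max_eq_right (by linarith)

lemma maxs_eq_sq {s r : ℝ} (hs : 0 < s) (h : |r| ≤ s) : maxs s r = (r + s) ^ 2 / (4 * s) := by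
  unfold maxs; split_ifs with h'
  · have : |r| = s := le_antisymm h h'
    rcases abs_eq (le_of_lt hs) |>.mp this with h1 | h1
    · subst h1
      rw [max_eq_right (le_of_lt hs)]
      field_simp; ring
    · subst h1
      rw [max_eq_left (by linarith)]
      have : (-s + s) ^ 2 = 0 := by ring
      rw [this]; simp
  · rfl

lemma psi_val1 {s γ r : ℝ} (hs : 0 < s) (hr : 0 < r) (h : (1 + s) * r ≤ γ) :
    (1 - maxs s (1 - γ / r)) * r = r := by
  rw [maxs_eq_zero hs (by rw [sub_le_iff_le_add, ← sub_le_iff_le_add', le_div_iff₀ hr]; linarith)]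
  ring

lemma psi_val3 {s γ r : ℝ} (hs : 0 < s) (hr : 0 < r) (h : γ ≤ (1 - s) * r) :
    (1 - maxs s (1 - γ / r)) * r = γ := by
  rw [maxs_eq_id hs (by
    have : γ / r ≤ 1 - s := (div_le_iff₀ hr).mpr (by linarith)
    linarith)]
  field_simp
  ring

lemma psi_val2 {s γ r : ℝ} (hs : 0 < s) (hr : 0 < r) (h1 : (1 - s) * r ≤ γ)
    (h2 : γ ≤ (1 + s) * r) :
    (1 - maxs s (1 - γ / r)) * r = r - ((1 + s) * r - γ) ^ 2 / (4 * s * r) := by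
  rw [maxs_eq_sq hs (by
    rw [abs_le]
    constructor
    · have : γ / r ≤ 1 + s := (div_le_iff₀ hr).mpr (by linarith)
      linarith
    · rw [sub_le_iff_le_add, ← sub_le_iff_le_add', le_div_iff₀ hr]; linarith)]
  field_simp
  ring

lemma psi_mono {s γ a b : ℝ} (hs : 0 < s) (hs1 : s < 1) (hγ : 0 < γ)
    (ha : 0 < a) (hab : a ≤ b) :
    (1 - maxs s (1 - γ / a)) * a ≤ (1 - maxs s (1 - γ / b)) * b := by
  have hb : 0 < b := lt_of_lt_of_le ha hab
  rcases le_or_gt γ ((1 - s) * a) with h3a | h3a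
  · -- a in regime 3, so b in regime 3
    rw [psi_val3 hs ha h3a, psi_val3 hs hb (by nlinarith)]
  rcases le_or_gt ((1 + s) * a) γ with h1a | h1a
  · -- a in regime 1
    rw [psi_val1 hs ha h1a]
    rcases le_or_gt γ ((1 - s) * b) with h3b | h3b
    · rw [psi_val3 hs hb h3b]; nlinarith
    rcases le_or_gt ((1 + s) * b) γ with h1b | h1b
    · rw [psi_val1 hs hb h1b]; linarith
    · rw [psi_val2 hs hb (le_of_lt h3b) (le_of_lt h1b)]
      have h4b : (0:ℝ) < 4 * s * b := by positivity
      have key : ((1 + s) * b - γ) ^ 2 ≤ (b - a) * (4 * s * b) := by nlinarith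
      have := (div_le_iff₀ h4b).mpr key
      linarith
  · -- a in regime 2
    rw [psi_val2 hs ha (le_of_lt h3a) (le_of_lt h1a)]
    rcases le_or_gt γ ((1 - s) * b) with h3b | h3b
    · -- b in regime 3
      rw [psi_val3 hs hb h3b]
      have h4a : (0:ℝ) < 4 * s * a := by positivity
      have key : (a - γ) * (4 * s * a) ≤ ((1 + s) * a - γ) ^ 2 := by
        nlinarith [sq_nonneg ((1 - s) * a - γ)]
      have := (le_div_iff₀ h4a).mpr key
      linarith
    · -- b in regime 2 (regime 1 for b impossible since γ < (1+s)a ≤ (1+s)b)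
      have h1b : γ < (1 + s) * b := by nlinarith
      rw [psi_val2 hs hb (le_of_lt h3b) (le_of_lt h1b)]
      have h4a : (0:ℝ) < 4 * s * a := by positivity
      have h4b : (0:ℝ) < 4 * s * b := by positivity
      set u1 := (1 + s) * a - γ with hu1
      set u2 := (1 + s) * b - γ with hu2
      have key : u2 ^ 2 * (4 * s * a) ≤ u1 ^ 2 * (4 * s * b) + (b - a) * ((4 * s * a) * (4 * s * b)) := by
        have f1 : (1 - s) * a ≤ 2 * a - u1 := by simp only [hu1]; linarith
        have f2 : (1 - s) * (b - a) ≤ 2 * s * a - u1 := by simp only [hu1]; nlinarith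
        have f4 : 0 ≤ (1 - s) * (b - a) := by nlinarith
        have f5 : (1 - s) * a * ((1 - s) * (b - a)) ≤ (2 * a - u1) * (2 * s * a - u1) :=
          mul_le_mul f1 f2 f4 (by nlinarith)
        have f6 : 0 ≤ (b - a) * ((2 * a - u1) * (2 * s * a - u1) - (1 - s) * a * ((1 - s) * (b - a))) :=
          mul_nonneg (by linarith) (by linarith)
        have f7 := mul_nonneg hs.le f6
        simp only [hu1, hu2] at *
        nlinarith [f7]
      have goal2 : u2 ^ 2 / (4 * s * b) - u1 ^ 2 / (4 * s * a) ≤ b - a := by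
        rw [div_sub_div _ _ (ne_of_gt h4b) (ne_of_gt h4a), div_le_iff₀ (by positivity)]
        nlinarith [key]
      linarith

lemma key_scalar {s γ α β t : ℝ} (hs : 0 < s) (hs1 : s < 1) (hγ : 0 < γ)
    (hα : 0 ≤ α) (hβ : 0 ≤ β) (ht : t ≤ α * β) :
    0 ≤ (1 - maxs s (1 - γ / α)) * α ^ 2 + (1 - maxs s (1 - γ / β)) * β ^ 2
      - (2 - maxs s (1 - γ / α) - maxs s (1 - γ / β)) * t := by
  set hA := maxs s (1 - γ / α) with hhA
  set hB := maxs s (1 - γ / β) with hhB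
  have hA0 : 0 ≤ hA := maxs_nonneg hs
  have hB0 : 0 ≤ hB := maxs_nonneg hs
  have hA1 : hA ≤ 1 := maxs_le_one hs hs1 (by
    have : 0 ≤ γ / α := div_nonneg hγ.le hα
    linarith)
  have hB1 : hB ≤ 1 := maxs_le_one hs hs1 (by
    have : 0 ≤ γ / β := div_nonneg hγ.le hβ
    linarith)
  have step : (2 - hA - hB) * t ≤ (2 - hA - hB) * (α * β) :=
    mul_le_mul_of_nonneg_left ht (by linarith)
  have main : 0 ≤ (1 - hA) * α ^ 2 + (1 - hB) * β ^ 2 - (2 - hA - hB) * (α * β) := by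
    rcases eq_or_lt_of_le hα with hα0 | hα0
    · rw [← hα0]; nlinarith
    rcases eq_or_lt_of_le hβ with hβ0 | hβ0
    · rw [← hβ0]; nlinarith
    rcases le_total α β with hle | hle
    · have := psi_mono hs hs1 hγ hα0 hle
      rw [← hhA, ← hhB] at this
      nlinarith
    · have := psi_mono hs hs1 hγ hβ0 hle
      rw [← hhA, ← hhB] at this
      nlinarith
  linarith

/-! ### Matrix lemmas about `frob`, `fnorm` and `dev` -/

section MatrixLemmas

variable {d : ℕ}

lemma frob_sum (A B : Matrix (Fin d) (Fin d) ℝ) (hB : B.IsSymm) :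
    frob A B = ∑ p : Fin d × Fin d, A p.1 p.2 * B p.1 p.2 := by
  rw [frob, Matrix.trace, Fintype.sum_prod_type]
  simp only [Matrix.diag, Matrix.mul_apply]
  exact Finset.sum_congr rfl fun i _ => Finset.sum_congr rfl fun j _ => by rw [hB.apply i j]

lemma frob_self_nonneg (A : Matrix (Fin d) (Fin d) ℝ) (hA : A.IsSymm) : 0 ≤ frob A A := by
  rw [frob_sum A A hA]
  exact Finset.sum_nonneg fun p _ => mul_self_nonneg _

lemma fnorm_sq (A : Matrix (Fin d) (Fin d) ℝ) (hA : A.IsSymm) : fnorm A ^ 2 = frob A A :=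
  Real.sq_sqrt (frob_self_nonneg A hA)

lemma frob_le_fnorm (A B : Matrix (Fin d) (Fin d) ℝ) (hA : A.IsSymm) (hB : B.IsSymm) :
    frob A B ≤ fnorm A * fnorm B := by
  rw [frob_sum A B hB, fnorm, fnorm, frob_sum A A hA, frob_sum B B hB]
  have := Real.sum_mul_le_sqrt_mul_sqrt Finset.univ
    (fun p : Fin d × Fin d => A p.1 p.2) (fun p : Fin d × Fin d => B p.1 p.2)
  simpa [pow_two] using this

lemma frob_comm (A B : Matrix (Fin d) (Fin d) ℝ) : frob A B = frob B A :=
  Matrix.trace_mul_comm A B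

lemma frob_sub_left (A B C : Matrix (Fin d) (Fin d) ℝ) :
    frob (A - B) C = frob A C - frob B C := by
  simp [frob, Matrix.sub_mul]

lemma frob_sub_right (A B C : Matrix (Fin d) (Fin d) ℝ) :
    frob A (B - C) = frob A B - frob A C := by
  simp [frob, Matrix.mul_sub]

lemma frob_smul_left (c : ℝ) (A B : Matrix (Fin d) (Fin d) ℝ) :
    frob (c • A) B = c * frob A B := by
  simp [frob, Matrix.smul_mul]

lemma frob_smul_right (c : ℝ) (A B : Matrix (Fin d) (Fin d) ℝ) :
    frob A (c • B) = c * frob A B := by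
  simp [frob, Matrix.mul_smul]

lemma frob_add_left (A B C : Matrix (Fin d) (Fin d) ℝ) :
    frob (A + B) C = frob A C + frob B C := by
  simp [frob, Matrix.add_mul]

lemma frob_add_right (A B C : Matrix (Fin d) (Fin d) ℝ) :
    frob A (B + C) = frob A B + frob A C := by
  simp [frob, Matrix.mul_add]

lemma trace_dev (hd : 0 < d) (A : Matrix (Fin d) (Fin d) ℝ) : Matrix.trace (dev A) = 0 := by
  have hd' : (d : ℝ) ≠ 0 := Nat.cast_ne_zero.mpr hd.ne'
  simp [dev, Matrix.trace_sub, Matrix.trace_smul, Matrix.trace_one, smul_eq_mul]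
  field_simp
  ring

lemma dev_sub (A B : Matrix (Fin d) (Fin d) ℝ) : dev (A - B) = dev A - dev B := by
  simp only [dev, Matrix.trace_sub, sub_div, sub_smul]
  abel

lemma dev_symm {A : Matrix (Fin d) (Fin d) ℝ} (hA : A.IsSymm) : (dev A).IsSymm :=
  hA.sub (Matrix.isSymm_one.smul _)

lemma frob_traceless (C X : Matrix (Fin d) (Fin d) ℝ) (hC : Matrix.trace C = 0) :
    frob C X = frob C (dev X) := by
  rw [dev, frob_sub_right, frob_smul_right]
  simp [frob, hC]

lemma frob_dev_le (hd : 0 < d) (X : Matrix (Fin d) (Fin d) ℝ) :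
    frob (dev X) (dev X) ≤ frob X X := by
  have h1 : frob (dev X) X = frob (dev X) (dev X) := frob_traceless _ _ (trace_dev hd X)
  have h2 : frob X X = frob (dev X) (dev X) + (Matrix.trace X / (d:ℝ)) ^ 2 * d := by
    have hX : X = dev X + (Matrix.trace X / (d : ℝ)) • 1 := by simp [dev]
    have e1 : frob (1 : Matrix (Fin d) (Fin d) ℝ) (dev X) = 0 := by
      simp [frob, trace_dev hd]
    have e2 : frob (dev X) (1 : Matrix (Fin d) (Fin d) ℝ) = 0 := by
      simp [frob, trace_dev hd]
    have e3 : frob (1 : Matrix (Fin d) (Fin d) ℝ) 1 = (d : ℝ) := by simp [frob]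
    conv_lhs => rw [hX]
    rw [frob_add_left, frob_add_right, frob_add_right, frob_smul_left, frob_smul_left,
      frob_smul_right, frob_smul_right, e1, e2, e3]
    ring
  nlinarith [sq_nonneg (Matrix.trace X / (d:ℝ)), Nat.cast_nonneg (α := ℝ) d]

end MatrixLemmas

/-- For every `s ∈ (0,1)` and `γ > 0`, the smoothed von Mises resolvent `R_s` is
monotone on the symmetric matrices: `(R_s τ - R_s σ) : (τ - σ) ≥ 0`. -/
theorem smoothed_resolvent_monotone
    (d : ℕ) (hd : 0 < d) (s : ℝ) (hs : s ∈ Set.Ioo (0 : ℝ) 1) (γ : ℝ) (hγ : 0 < γ)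
    (σ τ : Matrix (Fin d) (Fin d) ℝ) (hσ : σ.IsSymm) (hτ : τ.IsSymm) :
    0 ≤ frob (Rs s γ τ - Rs s γ σ) (τ - σ) := by
  obtain ⟨hs0, hs1⟩ := hs
  have hAs : (dev σ).IsSymm := dev_symm hσ
  have hBs : (dev τ).IsSymm := dev_symm hτ
  have hRτ : Rs s γ τ = τ - maxs s (1 - γ / fnorm (dev τ)) • dev τ := by
    by_cases h : dev τ = 0 <;> simp [Rs, h]
  have hRσ : Rs s γ σ = σ - maxs s (1 - γ / fnorm (dev σ)) • dev σ := by
    by_cases h : dev σ = 0 <;> simp [Rs, h]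
  rw [hRτ, hRσ]
  set mA := maxs s (1 - γ / fnorm (dev σ)) with hmA
  set mB := maxs s (1 - γ / fnorm (dev τ)) with hmB
  set A := dev σ with hA'
  set B := dev τ with hB'
  rw [sub_sub_sub_comm, frob_sub_left]
  have hCtr : Matrix.trace (mB • B - mA • A) = 0 := by
    rw [Matrix.trace_sub, Matrix.trace_smul, Matrix.trace_smul, hA', hB',
      trace_dev hd, trace_dev hd]
    simp
  have h1 : frob (mB • B - mA • A) (τ - σ) = frob (mB • B - mA • A) (B - A) := by
    rw [frob_traceless _ _ hCtr, hA', hB', dev_sub]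
  have hsub : (τ - σ).IsSymm := hτ.sub hσ
  have h2 : frob (B - A) (B - A) ≤ frob (τ - σ) (τ - σ) := by
    have := frob_dev_le hd (τ - σ)
    rwa [dev_sub, ← hA', ← hB'] at this
  have eC : frob (mB • B - mA • A) (B - A)
      = mB * frob B B + mA * frob A A - (mA + mB) * frob A B := by
    rw [frob_sub_left, frob_sub_right, frob_sub_right, frob_smul_left, frob_smul_left,
      frob_smul_left, frob_smul_left, frob_comm B A]
    ring
  have eBA : frob (B - A) (B - A) = frob B B + frob A A - 2 * frob A B := by
    rw [frob_sub_left, frob_sub_right, frob_sub_right, frob_comm B A]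
    ring
  have hα2 : fnorm A ^ 2 = frob A A := fnorm_sq A hAs
  have hβ2 : fnorm B ^ 2 = frob B B := fnorm_sq B hBs
  have ht : frob A B ≤ fnorm A * fnorm B := frob_le_fnorm A B hAs hBs
  have key := key_scalar (α := fnorm A) (β := fnorm B) (t := frob A B)
    hs0 hs1 hγ (Real.sqrt_nonneg _) (Real.sqrt_nonneg _) ht
  rw [hα2, hβ2, ← hmA, ← hmB] at key
  linarith [h1, h2, eC, eBA, key]
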